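/- Let H be a real Hilbert space, L : H × H → ℝ ∪ {+∞} an anti-selfdual Lagrangian, λ > 0, and suppose x, y ∈ H satisfy −(y,x) ∈ ∂L_λ(x,y) and that the infimum inf_{z∈H} { L(z,y) + ‖x−z‖²/(2λ) } is attained at a point z₀ = J_λ(x,y). Then −(y, z₀) ∈ ∂L(z₀, y). -/

import Mathlib

open scoped RealInnerProductSpace NNReal

noncomputable section

/-- Convexity for `EReal`-valued functions. -/
def ERealConvexOn {E : Type*} [AddCommGroup E] [Module ℝ E] (f : E → EReal) : Prop :=
  ∀ x y : E, ∀ s t : ℝ, 0 ≤ s → 0 ≤ t → s + t = 1 →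
    f (s • x + t • y) ≤ (s : EReal) * f x + (t : EReal) * f y

/-- The Legendre–Fenchel dual, in both variables, of a Lagrangian on `H × H`. -/
def lagrangianDualH {H : Type*} [NormedAddCommGroup H] [InnerProductSpace ℝ H]
    (L : H × H → EReal) (q y : H) : EReal :=
  ⨆ x : H, ⨆ p : H, ((⟪q, x⟫ + ⟪y, p⟫ : ℝ) : EReal) - L (x, p)

/-- A Lagrangian on a Hilbert space is anti-selfdual if `L*(p,x) = L(−x,−p)`. -/
def IsASDH {H : Type*} [NormedAddCommGroup H] [InnerProductSpace ℝ H]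
    (L : H × H → EReal) : Prop :=
  ∀ p x : H, lagrangianDualH L p x = L (-x, -p)

/-- `(q,y) ∈ ∂L(x,p)`, the subdifferential of the Lagrangian `L` at `(x,p)`. -/
def MemSubdiff {H : Type*} [NormedAddCommGroup H] [InnerProductSpace ℝ H]
    (L : H × H → EReal) (x p q y : H) : Prop :=
  ∀ z r : H, L (x, p) + ((⟪q, z - x⟫ + ⟪y, r - p⟫ : ℝ) : EReal) ≤ L (z, r)

/-- `y ∈ ∂₂L(u,v)`, the subdifferential in the second variable. -/
def MemSubdiff2 {H : Type*} [NormedAddCommGroup H] [InnerProductSpace ℝ H]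
    (L : H × H → EReal) (u v y : H) : Prop :=
  ∀ r : H, L (u, v) + ((⟪y, r - v⟫ : ℝ) : EReal) ≤ L (u, r)

/-- `q ∈ ∂₁L(x,p)`, the subdifferential in the first variable. -/
def MemSubdiff1 {H : Type*} [NormedAddCommGroup H] [InnerProductSpace ℝ H]
    (L : H × H → EReal) (x p q : H) : Prop :=
  ∀ z : H, L (x, p) + ((⟪q, z - x⟫ : ℝ) : EReal) ≤ L (z, p)

/-- The `λ`-regularization of a Lagrangian:
`L_λ(x,p) = inf_z { L(z,p) + ‖x−z‖²/(2λ) } + (λ/2)‖p‖²`. -/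
def lagReg {H : Type*} [NormedAddCommGroup H] [InnerProductSpace ℝ H]
    (lam : ℝ) (L : H × H → EReal) (x p : H) : EReal :=
  (⨅ z : H, L (z, p) + ((‖x - z‖ ^ 2 / (2 * lam) : ℝ) : EReal))
    + ((lam / 2 * ‖p‖ ^ 2 : ℝ) : EReal)

/-- if `−(y,x) ∈ ∂L_λ(x,y)` and the infimum defining `L_λ(x,y)` is attained at
`z₀ = J_λ(x,y)`, then `−(y,z₀) ∈ ∂L(z₀,y)`. -/
theorem stmt12 {H : Type*} [NormedAddCommGroup H] [InnerProductSpace ℝ H] [CompleteSpace H]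
    (L : H × H → EReal)
    (hconv : ERealConvexOn L)
    (hlsc : LowerSemicontinuous L)
    (hproper : ∃ z, L z ≠ ⊤) (hreal : ∀ z, L z ≠ ⊥)
    (hASD : IsASDH L)
    (lam : ℝ) (hlam : 0 < lam)
    (x y z₀ : H)
    -- `−(y,x) ∈ ∂L_λ(x,y)`
    (hsub : MemSubdiff (fun zp : H × H => lagReg lam L zp.1 zp.2) x y (-y) (-x))
    -- the infimum defining `L_λ(x,y)` is attained at `z₀`
    (hmin : ∀ z : H, L (z₀, y) + ((‖x - z₀‖ ^ 2 / (2 * lam) : ℝ) : EReal)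
      ≤ L (z, y) + ((‖x - z‖ ^ 2 / (2 * lam) : ℝ) : EReal)) :
    MemSubdiff L z₀ y (-y) (-z₀) := by
  classical
  -- generic upper bound on lagReg
  have hub : ∀ (z r w : H),
      lagReg lam L z r ≤ L (w, r) + ((‖z - w‖ ^ 2 / (2 * lam) + lam / 2 * ‖r‖ ^ 2 : ℝ) : EReal) := by
    intro z r w
    unfold lagReg
    rw [EReal.coe_add, ← add_assoc]
    exact add_le_add_left (iInf_le _ w) _
  -- finiteness of L (z₀, y)
  have hne_top : L (z₀, y) ≠ ⊤ := by
    intro htop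
    obtain ⟨w₀, hw₀⟩ := hproper
    have hall : ∀ z : H, L (z, y) = ⊤ := by
      intro z
      by_contra hz
      have hz' := EReal.coe_toReal hz (hreal _)
      have h := hmin z
      rw [htop, ← hz', EReal.top_add_coe, ← EReal.coe_add] at h
      exact (EReal.coe_lt_top _).not_ge h
    have hMxy : lagReg lam L x y = ⊤ := by
      unfold lagReg
      have h1 : ∀ z : H, L (z, y) + ((‖x - z‖ ^ 2 / (2 * lam) : ℝ) : EReal) = ⊤ := by
        intro z; rw [hall z]; exact EReal.top_add_coe _
      simp only [h1, iInf_const, EReal.top_add_coe]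
    have h := hsub w₀.1 w₀.2
    simp only [hMxy, EReal.top_add_coe, top_le_iff] at h
    have h2 := hub w₀.1 w₀.2 w₀.1
    rw [h, ← EReal.coe_toReal hw₀ (hreal _), ← EReal.coe_add, top_le_iff] at h2
    exact (EReal.coe_lt_top _).ne h2
  set ℓ : ℝ := (L (z₀, y)).toReal with hℓdef
  have hℓ : L (z₀, y) = (ℓ : EReal) := (EReal.coe_toReal hne_top (hreal _)).symm
  -- lower bound on lagReg lam L x y
  have hlb : ((ℓ + ‖x - z₀‖ ^ 2 / (2 * lam) + lam / 2 * ‖y‖ ^ 2 : ℝ) : EReal)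
      ≤ lagReg lam L x y := by
    unfold lagReg
    rw [EReal.coe_add]
    refine add_le_add_left (le_iInf fun z => ?_) _
    rw [EReal.coe_add, ← hℓ]
    exact hmin z
  -- real-valued chain inequality
  have chainR : ∀ (z r w : H) (c : ℝ), L (w, r) ≤ (c : EReal) →
      ℓ + ‖x - z₀‖ ^ 2 / (2 * lam) + lam / 2 * ‖y‖ ^ 2 + (⟪-y, z - x⟫ + ⟪-x, r - y⟫)
        ≤ c + (‖z - w‖ ^ 2 / (2 * lam) + lam / 2 * ‖r‖ ^ 2) := by
    intro z r w c hc
    have h1 : lagReg lam L x y + ((⟪-y, z - x⟫ + ⟪-x, r - y⟫ : ℝ) : EReal)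
        ≤ lagReg lam L z r := hsub z r
    have h2 : lagReg lam L z r
        ≤ ((c + (‖z - w‖ ^ 2 / (2 * lam) + lam / 2 * ‖r‖ ^ 2) : ℝ) : EReal) := by
      refine (hub z r w).trans ?_
      rw [EReal.coe_add]
      exact add_le_add_left hc _
    have h3 := le_trans (le_trans (add_le_add_left hlb _) h1) h2
    rw [← EReal.coe_add] at h3
    exact_mod_cast h3
  -- step 2/3 : z₀ = x + lam • y
  have hz₀ : z₀ = x + lam • y := by
    have h := chainR (z₀ - lam • y) y z₀ ℓ (le_of_eq hℓ)
    have e1 : ⟪-y, z₀ - lam • y - x⟫ = -⟪y, z₀ - x⟫ + lam * ‖y‖ ^ 2 := by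
      have : z₀ - lam • y - x = (z₀ - x) - lam • y := by abel
      rw [this, inner_neg_left, inner_sub_right, real_inner_smul_right,
        real_inner_self_eq_norm_sq]
      ring
    have e2 : z₀ - lam • y - z₀ = -(lam • y) := by abel
    have e3 : ‖z₀ - lam • y - z₀‖ ^ 2 = lam ^ 2 * ‖y‖ ^ 2 := by
      rw [e2, norm_neg, norm_smul, Real.norm_eq_abs, mul_pow, sq_abs]
    rw [e1, e3, sub_self, inner_zero_right] at h
    have key2 : ‖x - z₀‖ ^ 2 + lam ^ 2 * ‖y‖ ^ 2 ≤ 2 * lam * ⟪y, z₀ - x⟫ := by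
      have h2l : (0:ℝ) < 2 * lam := by linarith
      have e4 : lam ^ 2 * ‖y‖ ^ 2 / (2 * lam) = lam / 2 * ‖y‖ ^ 2 := by
        field_simp
      rw [e4] at h
      have h4 : ‖x - z₀‖ ^ 2 / (2 * lam) ≤ ⟪y, z₀ - x⟫ - lam * ‖y‖ ^ 2 / 2 := by
        linarith
      have h5 := (div_le_iff₀ h2l).mp h4
      nlinarith [h5]
    have hnorm : ‖z₀ - x - lam • y‖ ^ 2
        = ‖x - z₀‖ ^ 2 - 2 * lam * ⟪y, z₀ - x⟫ + lam ^ 2 * ‖y‖ ^ 2 := by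
      rw [show z₀ - x - lam • y = (z₀ - x) - lam • y from rfl, norm_sub_sq_real,
        real_inner_smul_right, norm_smul, Real.norm_eq_abs, mul_pow, sq_abs,
        norm_sub_rev, real_inner_comm]
      ring
    have hz : ‖z₀ - x - lam • y‖ ^ 2 ≤ 0 := by rw [hnorm]; linarith
    have hz' : z₀ - x - lam • y = 0 := by
      have h0 : ‖z₀ - x - lam • y‖ = 0 := by
        nlinarith [norm_nonneg (z₀ - x - lam • y)]
      exact norm_eq_zero.mp h0
    have hz2 : z₀ - (x + lam • y) = 0 := by rw [← hz']; abel
    exact sub_eq_zero.mp hz2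
  -- main step: for every (w, r), the subdifferential inequality for L at (z₀, y)
  intro w r
  rcases eq_or_ne (L (w, r)) ⊤ with htopwr | hnewr
  · rw [htopwr]; exact le_top
  set c : ℝ := (L (w, r)).toReal with hcdef
  have hc : L (w, r) = (c : EReal) := (EReal.coe_toReal hnewr (hreal _)).symm
  have key : ∀ t : ℝ, 0 < t → t ≤ 1 →
      ℓ - ⟪y, w - z₀⟫ - ⟪z₀, r - y⟫ ≤ c + lam * t * ‖r - y‖ ^ 2 / 2 := by
    intro t ht ht1
    have hconv' := hconv (z₀, y) (w, r) (1 - t) t (by linarith) (le_of_lt ht) (by ring)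
    have hpt : ((1 - t) : ℝ) • ((z₀, y) : H × H) + t • ((w, r) : H × H)
        = (z₀ + t • (w - z₀), y + t • (r - y)) := by
      simp only [Prod.smul_mk, Prod.mk_add_mk, Prod.mk.injEq, smul_sub, sub_smul, one_smul, Prod.mk_sub_mk]
      constructor <;> abel
    have hL : L (z₀ + t • (w - z₀), y + t • (r - y))
        ≤ (((1 - t) * ℓ + t * c : ℝ) : EReal) := by
      rw [← hpt]
      refine hconv'.trans ?_
      rw [hℓ, hc, ← EReal.coe_mul, ← EReal.coe_mul, ← EReal.coe_add]
    have h := chainR (x + t • (w - z₀)) (y + t • (r - y)) (z₀ + t • (w - z₀))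
      ((1 - t) * ℓ + t * c) hL
    -- simplify the inner products and norms
    have e1 : ⟪-y, x + t • (w - z₀) - x⟫ = -(t * ⟪y, w - z₀⟫) := by
      rw [add_sub_cancel_left, inner_neg_left, real_inner_smul_right]
    have e2 : ⟪-x, y + t • (r - y) - y⟫ = -(t * ⟪x, r - y⟫) := by
      rw [add_sub_cancel_left, inner_neg_left, real_inner_smul_right]
    have e3 : x + t • (w - z₀) - (z₀ + t • (w - z₀)) = x - z₀ := by abel
    have e4 : ‖y + t • (r - y)‖ ^ 2
        = ‖y‖ ^ 2 + 2 * (t * ⟪y, r - y⟫) + t ^ 2 * ‖r - y‖ ^ 2 := by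
      rw [norm_add_sq_real, real_inner_smul_right, norm_smul, Real.norm_eq_abs,
        mul_pow, sq_abs]
    rw [e1, e2, e3, e4] at h
    have h5 : t * (ℓ - ⟪y, w - z₀⟫ - ⟪x, r - y⟫ - lam * ⟪y, r - y⟫)
        ≤ t * (c + lam * t * ‖r - y‖ ^ 2 / 2) := by nlinarith [h]
    have h6 : ℓ - ⟪y, w - z₀⟫ - ⟪x, r - y⟫ - lam * ⟪y, r - y⟫
        ≤ c + lam * t * ‖r - y‖ ^ 2 / 2 := le_of_mul_le_mul_left (by linarith) ht
    have e5 : ⟪z₀, r - y⟫ = ⟪x, r - y⟫ + lam * ⟪y, r - y⟫ := by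
      rw [hz₀, inner_add_left, real_inner_smul_left]
    linarith
  have hfin : ℓ - ⟪y, w - z₀⟫ - ⟪z₀, r - y⟫ ≤ c := by
    refine le_of_forall_pos_le_add fun ε hε => ?_
    have hK : (0:ℝ) ≤ lam * ‖r - y‖ ^ 2 / 2 := by positivity
    set K : ℝ := lam * ‖r - y‖ ^ 2 / 2 with hKdef
    have ht0 : 0 < min 1 (ε / (K + 1)) := lt_min one_pos (by positivity)
    have h := key (min 1 (ε / (K + 1))) ht0 (min_le_left _ _)
    have hKt : lam * min 1 (ε / (K + 1)) * ‖r - y‖ ^ 2 / 2 ≤ ε := by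
      have h1 : min 1 (ε / (K + 1)) ≤ ε / (K + 1) := min_le_right _ _
      have h2 : K * min 1 (ε / (K + 1)) ≤ K * (ε / (K + 1)) :=
        mul_le_mul_of_nonneg_left h1 hK
      have h3 : K * (ε / (K + 1)) ≤ ε := by
        rw [mul_div_assoc']
        rw [div_le_iff₀ (by linarith)]
        nlinarith
      calc lam * min 1 (ε / (K + 1)) * ‖r - y‖ ^ 2 / 2
          = K * min 1 (ε / (K + 1)) := by rw [hKdef]; ring
        _ ≤ ε := h2.trans h3
    linarith
  rw [hℓ, hc, ← EReal.coe_add, EReal.coe_le_coe_iff]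
  have e6 : ⟪-y, w - z₀⟫ = -⟪y, w - z₀⟫ := inner_neg_left _ _
  have e7 : ⟪-z₀, r - y⟫ = -⟪z₀, r - y⟫ := inner_neg_left _ _
  rw [e6, e7]
  linarith
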